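/- Under the assumptions below, the semiparametric representation m₀(X,Z) = μ + Zᵀβ + g(X) with E[g(X)] = 0 is identifiable: if μ₁ + Zᵀβ₁ + g₁(X) = μ₂ + Zᵀβ₂ + g₂(X) almost surely with E[g₁(X)] = E[g₂(X)] = 0 and the matrix E[(Z − E[Z|X])(Z − E[Z|X])ᵀ] is positive definite, then μ₁ = μ₂, β₁ = β₂, and g₁(X) = g₂(X) almost surely. -/

import Mathlib

open MeasureTheory Matrix

lemma memLp_two_condexp {α : Type*} {m m0 : MeasurableSpace α} {μ : Measure α}
    [IsFiniteMeasure μ] (hm : m ≤ m0) {f : α → ℝ} (hf : MemLp f 2 μ) :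
    MemLp (μ[f|m]) 2 μ := by
  have hfi : Integrable f μ := hf.integrable one_le_two
  set fL : Lp ℝ 2 μ := hf.toLp f with hfL
  have h1 : ((condExpL2 ℝ ℝ hm fL : lpMeas ℝ ℝ m 2 μ) : α → ℝ) =ᵐ[μ] μ[f|m] := by
    refine ae_eq_condExp_of_forall_setIntegral_eq hm hfi
      (fun s hs hμs => integrableOn_condExpL2_of_measure_ne_top hm hμs.ne fL)
      (fun s hs hμs => ?_)
      (aestronglyMeasurable_condExpL2 hm fL)
    rw [integral_condExpL2_eq hm fL hs hμs.ne]
    exact setIntegral_congr_ae (hm s hs) ((hf.coeFn_toLp).mono fun x hx _ => hx)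
  exact (Lp.memLp ((condExpL2 ℝ ℝ hm fL : lpMeas ℝ ℝ m 2 μ) : Lp ℝ 2 μ)).ae_eq h1

lemma integrable_mul_of_memLp_two {α : Type*} {m0 : MeasurableSpace α} {μ : Measure α}
    {u v : α → ℝ} (hu : MemLp u 2 μ) (hv : MemLp v 2 μ) :
    Integrable (fun ω => u ω * v ω) μ := by
  have h : MemLp (u • v) 1 μ := MemLp.smul hv hu
    (hpqr := ⟨by rw [ENNReal.inv_two_add_inv_two, inv_one]⟩)
  exact memLp_one_iff_integrable.mp h


/-- identifiability of the semiparametric representation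
`m₀(X,Z) = μ + Zᵀβ + g(X)` with `E[g(X)] = 0`, provided the conditional
covariance matrix `E[(Z - E[Z|X])(Z - E[Z|X])ᵀ]` is positive definite. -/
theorem stmt1
    {Ω : Type*} [MeasurableSpace Ω] (P : Measure Ω) [IsProbabilityMeasure P]
    {p q : ℕ}
    (X : Ω → (Fin p → ℝ)) (Z : Ω → (Fin q → ℝ))
    (hX : Measurable X) (hZ : Measurable Z)
    (hZ2 : ∀ s, MemLp (fun ω => Z ω s) 2 P)
    (μ₁ μ₂ : ℝ) (β₁ β₂ : Fin q → ℝ) (g₁ g₂ : (Fin p → ℝ) → ℝ)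
    (hg₁ : Measurable g₁) (hg₂ : Measurable g₂)
    (hg₁2 : MemLp (fun ω => g₁ (X ω)) 2 P) (hg₂2 : MemLp (fun ω => g₂ (X ω)) 2 P)
    (hmean₁ : ∫ ω, g₁ (X ω) ∂P = 0) (hmean₂ : ∫ ω, g₂ (X ω) ∂P = 0)
    (B : Matrix (Fin q) (Fin q) ℝ)
    (hB : ∀ s t, B s t =
      ∫ ω, (Z ω s - (P[(fun ω => Z ω s) | MeasurableSpace.comap X inferInstance]) ω)
        * (Z ω t - (P[(fun ω => Z ω t) | MeasurableSpace.comap X inferInstance]) ω) ∂P)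
    (hBpd : B.PosDef)
    (heq : ∀ᵐ ω ∂P,
      μ₁ + (∑ s, Z ω s * β₁ s) + g₁ (X ω) = μ₂ + (∑ s, Z ω s * β₂ s) + g₂ (X ω)) :
    μ₁ = μ₂ ∧ β₁ = β₂ ∧ ((fun ω => g₁ (X ω)) =ᵐ[P] (fun ω => g₂ (X ω))) := by
  classical
  have hm : MeasurableSpace.comap X inferInstance ≤ (inferInstance : MeasurableSpace Ω) :=
    hX.comap_le
  set m : MeasurableSpace Ω := MeasurableSpace.comap X inferInstance with hm_def
  set M : Fin q → Ω → ℝ := fun s => P[(fun ω => Z ω s) | m] with hM_def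
  set W : Fin q → Ω → ℝ := fun s ω => Z ω s - M s ω with hW_def
  have hW2 : ∀ s, MemLp (W s) 2 P := by
    intro s
    simp only [hW_def, hM_def]
    exact (hZ2 s).sub (memLp_two_condexp hm (hZ2 s))
  set δ : Fin q → ℝ := β₁ - β₂ with hδ_def
  have hXm : Measurable[m] X := fun t ht => ⟨t, ht, rfl⟩
  set f : (Fin p → ℝ) → ℝ := fun x => (μ₂ - μ₁) + (g₂ x - g₁ x) with hf_def
  have hfX_int : Integrable (fun ω => f (X ω)) P := by
    apply Integrable.add (integrable_const _)
    exact (hg₂2.integrable one_le_two).sub (hg₁2.integrable one_le_two)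
  have hfXm : StronglyMeasurable[m] (fun ω => f (X ω)) :=
    Measurable.stronglyMeasurable ((measurable_const.add (hg₂.sub hg₁)).comp hXm)
  have heq' : (fun ω => ∑ s, δ s * Z ω s) =ᵐ[P] fun ω => f (X ω) := by
    filter_upwards [heq] with ω hω
    have h1 : ∑ s, δ s * Z ω s = (∑ s, Z ω s * β₁ s) - (∑ s, Z ω s * β₂ s) := by
      rw [← Finset.sum_sub_distrib]
      refine Finset.sum_congr rfl fun s _ => ?_
      simp only [hδ_def, Pi.sub_apply]; ring
    rw [h1, hf_def]; dsimp only; linarith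
  have hZs_int : ∀ s : Fin q, Integrable (fun ω => Z ω s) P :=
    fun s => (hZ2 s).integrable one_le_two
  -- conditional expectation of the linear combination
  have hc1 : P[(fun ω => ∑ s, δ s * Z ω s)|m] =ᵐ[P] fun ω => ∑ s, δ s * M s ω := by
    have hrw : (fun ω => ∑ s, δ s * Z ω s)
        = ∑ s : Fin q, (δ s • fun ω => Z ω s) := by
      funext ω; simp [Finset.sum_apply]
    have hsum := condExp_finsetSum (μ := P) (m := m) (s := Finset.univ)
      (f := fun s : Fin q => (δ s • fun ω => Z ω s))
      (fun s _ => Integrable.smul (δ s) (hZs_int s))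
    have hterm : ∀ s : Fin q,
        P[(δ s • fun ω => Z ω s)|m] =ᵐ[P] fun ω => δ s * M s ω := by
      intro s
      refine (condExp_smul (δ s) (fun ω => Z ω s) m).trans ?_
      filter_upwards with ω; simp [hM_def]
    rw [hrw]
    refine hsum.trans ?_
    filter_upwards [ae_all_iff.mpr hterm] with ω hω
    simp only [Finset.sum_apply]
    exact Finset.sum_congr rfl fun s _ => hω s
  have hc2 : P[(fun ω => ∑ s, δ s * Z ω s)|m] =ᵐ[P] fun ω => f (X ω) := by
    refine (condExp_congr_ae heq').trans ?_
    rw [condExp_of_stronglyMeasurable hm hfXm hfX_int]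
  have hkey : (fun ω => ∑ s, δ s * W s ω) =ᵐ[P] 0 := by
    filter_upwards [heq', hc1.symm.trans hc2] with ω h1 h2
    simp only [hW_def, mul_sub, Finset.sum_sub_distrib, Pi.zero_apply]
    rw [h1, h2]; ring
  -- the product integrability
  have hint : ∀ s t : Fin q, Integrable (fun ω => W s ω * W t ω) P :=
    fun s t => integrable_mul_of_memLp_two (hW2 s) (hW2 t)
  -- β₁ = β₂
  have hδ0 : δ = 0 := by
    by_contra hδ
    have hpos : 0 < δ ⬝ᵥ B *ᵥ δ := by
      have := hBpd.dotProduct_mulVec_pos hδ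
      simpa using this
    have hterm_int : ∀ s t : Fin q,
        Integrable (fun ω => δ s * W s ω * (δ t * W t ω)) P := by
      intro s t
      exact ((hint s t).const_mul (δ s * δ t)).congr
        (Filter.Eventually.of_forall fun ω => by ring)
    have hquad : δ ⬝ᵥ B *ᵥ δ = ∫ ω, (∑ s, δ s * W s ω) ^ 2 ∂P := by
      have h1 : δ ⬝ᵥ B *ᵥ δ = ∑ s, ∑ t, ∫ ω, δ s * W s ω * (δ t * W t ω) ∂P := by
        simp only [dotProduct, mulVec, Finset.mul_sum]
        refine Finset.sum_congr rfl fun s _ => Finset.sum_congr rfl fun t _ => ?_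
        rw [hB s t]
        have h2 : ∫ ω, δ s * W s ω * (δ t * W t ω) ∂P
            = (δ s * δ t) * ∫ ω, (Z ω s - (P[(fun ω => Z ω s)|m]) ω)
                * (Z ω t - (P[(fun ω => Z ω t)|m]) ω) ∂P := by
          rw [← integral_const_mul]
          exact integral_congr_ae (Filter.Eventually.of_forall fun ω => by
            simp only [hW_def, hM_def]; ring)
        rw [h2]; ring
      have h3 : ∫ ω, (∑ s, ∑ t, δ s * W s ω * (δ t * W t ω)) ∂P
          = ∑ s, ∑ t, ∫ ω, δ s * W s ω * (δ t * W t ω) ∂P := by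
        rw [integral_finset_sum _ (fun s _ =>
          integrable_finset_sum _ (fun t _ => hterm_int s t))]
        exact Finset.sum_congr rfl fun s _ =>
          integral_finset_sum _ (fun t _ => hterm_int s t)
      rw [h1, ← h3]
      refine integral_congr_ae (Filter.Eventually.of_forall fun ω => ?_)
      simp only [sq, Finset.sum_mul_sum]
    have hzero : ∫ ω, (∑ s, δ s * W s ω) ^ 2 ∂P = 0 := by
      rw [integral_congr_ae (g := fun _ => (0:ℝ))]
      · simp
      · filter_upwards [hkey] with ω hω
        simp only [Pi.zero_apply] at hω
        rw [hω]; simp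
    rw [hquad, hzero] at hpos
    exact lt_irrefl _ hpos
  have hβ : β₁ = β₂ := sub_eq_zero.mp hδ0
  -- now μ₁ + g₁(X) = μ₂ + g₂(X) a.e.
  have heq2 : ∀ᵐ ω ∂P, μ₁ + g₁ (X ω) = μ₂ + g₂ (X ω) := by
    filter_upwards [heq] with ω hω
    rw [hβ] at hω; linarith
  have hμ : μ₁ = μ₂ := by
    have hi1 : Integrable (fun ω => μ₁ + g₁ (X ω)) P :=
      (integrable_const _).add (hg₁2.integrable one_le_two)
    have hi2 : Integrable (fun ω => μ₂ + g₂ (X ω)) P :=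
      (integrable_const _).add (hg₂2.integrable one_le_two)
    have := integral_congr_ae heq2
    rw [integral_add (integrable_const _) (hg₁2.integrable one_le_two),
      integral_add (integrable_const _) (hg₂2.integrable one_le_two),
      hmean₁, hmean₂] at this
    simpa [measure_univ] using this
  refine ⟨hμ, hβ, ?_⟩
  filter_upwards [heq2] with ω hω
  rw [hμ] at hω; linarith
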